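/- Let S be a finite simple non-abelian group, let n ≥ 1, and let G be a subgroup of S^n such that proj_i(G) = S for every i ∈ {1,…,n}. Then G is a product of subdiagonals of S^n: there exist an equivalence relation ∼ on {1,…,n} and automorphisms α_1, …, α_n of S such that G = { g ∈ S^n : α_i^{-1}(g_i) = α_j^{-1}(g_j) for all i, j with i ∼ j }. -/

import Mathlib

section StmtOneHelpers
open scoped commutatorElement
variable {S : Type*} [Group S] {n : ℕ}

/-- The projection of `G` to coordinates `i, j` is all of `S × S`. -/
def myIsFull (G : Subgroup (Fin n → S)) (i j : Fin n) : Prop :=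
  ∀ s t : S, ∃ g ∈ G, g i = s ∧ g j = t

variable {G : Subgroup (Fin n → S)}

lemma myIsFull_symm {i j : Fin n} (h : myIsFull G i j) : myIsFull G j i := by
  intro s t; obtain ⟨g, hg, h1, h2⟩ := h t s; exact ⟨g, hg, h2, h1⟩

lemma my_claim1 [IsSimpleGroup S]
    (surj : ∀ (i : Fin n) (s : S), ∃ g ∈ G, g i = s)
    {i j : Fin n} (hne : ¬ myIsFull G i j) :
    ∀ g ∈ G, g i = 1 → g j = 1 := by
  set B : Subgroup S := Subgroup.map (Pi.evalMonoidHom (fun _ => S) j)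
      (G ⊓ (Pi.evalMonoidHom (fun _ => S) i).ker) with hB
  have hnormal : B.Normal := by
    constructor
    intro t ht x
    obtain ⟨g', hgmem, hgt⟩ := ht
    simp only [SetLike.mem_coe, Subgroup.mem_inf] at hgmem
    obtain ⟨hg'G, hg'k⟩ := hgmem
    have hg'i : g' i = 1 := hg'k
    have hgt' : g' j = t := hgt
    obtain ⟨hx, hxG, hxj⟩ := surj j x
    refine ⟨hx * g' * hx⁻¹, Subgroup.mem_inf.mpr ⟨mul_mem (mul_mem hxG hg'G) (inv_mem hxG), ?_⟩, ?_⟩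
    · show (hx * g' * hx⁻¹) i = 1
      simp [Pi.mul_apply, Pi.inv_apply, hg'i]
    · show (hx * g' * hx⁻¹) j = x * t * x⁻¹
      simp [Pi.mul_apply, Pi.inv_apply, hxj, hgt']
  rcases hnormal.eq_bot_or_eq_top with hbot | htop
  · intro g hg hgi
    have : g j ∈ B := ⟨g, ⟨hg, hgi⟩, rfl⟩
    rw [hbot] at this
    simpa using this
  · exfalso
    apply hne
    intro s t
    obtain ⟨hh, hhG, hhi⟩ := surj i s
    have : t * (hh j)⁻¹ ∈ B := by rw [htop]; trivial
    obtain ⟨g', hgmem, hgt⟩ := this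
    simp only [SetLike.mem_coe, Subgroup.mem_inf] at hgmem
    obtain ⟨hg'G, hg'k⟩ := hgmem
    have hg'i : g' i = 1 := hg'k
    have hgt' : g' j = t * (hh j)⁻¹ := hgt
    refine ⟨g' * hh, mul_mem hg'G hhG, ?_, ?_⟩
    · simp [Pi.mul_apply, hg'i, hhi]
    · show g' j * hh j = t
      rw [hgt']; group

lemma my_key2 [IsSimpleGroup S]
    (surj : ∀ (i : Fin n) (s : S), ∃ g ∈ G, g i = s)
    {i j : Fin n} (hne : ¬ myIsFull G i j) :
    ∀ g ∈ G, ∀ g' ∈ G, g i = g' i → g j = g' j := by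
  intro g hg g' hg' hij
  have h1 : (g * g'⁻¹) i = 1 := by simp [Pi.mul_apply, Pi.inv_apply, hij]
  have := my_claim1 surj hne (g * g'⁻¹) (mul_mem hg (inv_mem hg')) h1
  have : g j * (g' j)⁻¹ = 1 := this
  exact mul_inv_eq_one.mp this

lemma my_beta [IsSimpleGroup S]
    (surj : ∀ (i : Fin n) (s : S), ∃ g ∈ G, g i = s)
    {i j : Fin n} (hne : ¬ myIsFull G i j) :
    ∃ β : MulAut S, ∀ g ∈ G, β (g i) = g j := by
  classical
  have hne' : ¬ myIsFull G j i := fun hf => hne (myIsFull_symm hf)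
  have key := my_key2 surj hne
  have key' := my_key2 surj hne'
  choose e he1 he2 using fun s => surj i s
  choose e' he'1 he'2 using fun t => surj j t
  refine ⟨{ toFun := fun s => e s j
            invFun := fun t => e' t i
            left_inv := ?_
            right_inv := ?_
            map_mul' := ?_ }, ?_⟩
  · intro s
    have : e' (e s j) j = e s j := he'2 _
    have h2 := key' _ (he'1 _) _ (he1 s) this
    show e' (e s j) i = s
    rw [h2, he2]
  · intro t
    have : e (e' t i) i = e' t i := he2 _
    have h2 := key _ (he1 _) _ (he'1 t) this
    show e (e' t i) j = t
    rw [h2, he'2]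
  · intro s t
    have hm : (e s * e t) i = s * t := by simp [Pi.mul_apply, he2]
    have := key _ (he1 (s * t)) _ (mul_mem (he1 s) (he1 t)) (by rw [he2, hm])
    simpa [Pi.mul_apply] using this
  · intro g hg
    exact key _ (he1 (g i)) _ hg (he2 _)

lemma my_comm_top [IsSimpleGroup S] (hna : ∃ a b : S, a * b ≠ b * a) :
    commutator S = ⊤ := by
  rcases (Subgroup.commutator_normal (⊤ : Subgroup S) ⊤).eq_bot_or_eq_top (H := commutator S) with hbot | htop
  · exfalso
    obtain ⟨a, b, hab⟩ := hna
    have : ⁅a, b⁆ ∈ commutator S := by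
      rw [commutator_def]
      exact Subgroup.commutator_mem_commutator (Subgroup.mem_top a) (Subgroup.mem_top b)
    rw [hbot, Subgroup.mem_bot] at this
    exact hab (commutatorElement_eq_one_iff_mul_comm.mp this)
  · exact htop

lemma my_vanish [IsSimpleGroup S] (hna : ∃ a b : S, a * b ≠ b * a)
    (surj : ∀ (i : Fin n) (s : S), ∃ g ∈ G, g i = s)
    (T : Finset (Fin n)) :
    ∀ i : Fin n, i ∉ T → (∀ j ∈ T, myIsFull G i j) →
      ∀ s : S, ∃ g ∈ G, g i = s ∧ ∀ j ∈ T, g j = 1 := by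
  classical
  induction T using Finset.induction_on with
  | empty =>
    intro i _ _ s
    obtain ⟨g, hg, hgi⟩ := surj i s
    exact ⟨g, hg, hgi, by simp⟩
  | @insert j T hjT ih =>
    intro i hiT hfullT s
    have hij : i ≠ j := fun hh => hiT (hh ▸ Finset.mem_insert_self j T)
    have hiT' : i ∉ T := fun hh => hiT (Finset.mem_insert_of_mem hh)
    have hfT : ∀ k ∈ T, myIsFull G i k := fun k hk =>
      hfullT k (Finset.mem_insert_of_mem hk)
    have hfj : myIsFull G i j := hfullT j (Finset.mem_insert_self j T)
    -- the subgroup of achievable i-coordinates vanishing on insert j T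
    set K : Subgroup (Fin n → S) :=
      ⨅ k ∈ (insert j T : Finset (Fin n)), (Pi.evalMonoidHom (fun _ => S) k).ker with hK
    have hmemK : ∀ g : Fin n → S, g ∈ K ↔ ∀ k ∈ (insert j T : Finset (Fin n)), g k = 1 := by
      intro g
      simp [hK, Subgroup.mem_iInf, MonoidHom.mem_ker, Pi.evalMonoidHom]
    set M : Subgroup S := Subgroup.map (Pi.evalMonoidHom (fun _ => S) i) (G ⊓ K) with hM
    have hMcomm : ∀ u v : S, ⁅u, v⁆ ∈ M := by
      intro u v
      obtain ⟨g, hg, hgi, hgT⟩ := ih i hiT' hfT u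
      obtain ⟨hh, hhG, hhi, hhj⟩ := hfj v (g j)
      refine ⟨g * hh * g⁻¹ * hh⁻¹, Subgroup.mem_inf.mpr ⟨?_, ?_⟩, ?_⟩
      · exact mul_mem (mul_mem (mul_mem hg hhG) (inv_mem hg)) (inv_mem hhG)
      · rw [hmemK]
        intro k hk
        rcases Finset.mem_insert.mp hk with hkj | hkT
        · subst hkj
          show g k * hh k * (g k)⁻¹ * (hh k)⁻¹ = 1
          rw [hhj]; group
        · show g k * hh k * (g k)⁻¹ * (hh k)⁻¹ = 1
          rw [hgT k hkT]; group
      · show g i * hh i * (g i)⁻¹ * (hh i)⁻¹ = ⁅u, v⁆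
        rw [hgi, hhi]; rfl
    have hMtop : M = ⊤ := by
      rw [eq_top_iff, ← my_comm_top hna, commutator_def]
      rw [Subgroup.commutator_le]
      intro u _ v _
      exact hMcomm u v
    have hs : s ∈ M := by rw [hMtop]; trivial
    obtain ⟨g, hgmem, hgi⟩ := hs
    simp only [SetLike.mem_coe, Subgroup.mem_inf] at hgmem
    obtain ⟨hgG, hgK⟩ := hgmem
    exact ⟨g, hgG, hgi, (hmemK g).mp hgK⟩

lemma my_match [IsSimpleGroup S] (hna : ∃ a b : S, a * b ≠ b * a)
    (surj : ∀ (i : Fin n) (s : S), ∃ g ∈ G, g i = s)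
    (T : Finset (Fin n)) (hT : ∀ i ∈ T, ∀ j ∈ T, i ≠ j → myIsFull G i j)
    (f : Fin n → S) : ∃ g ∈ G, ∀ i ∈ T, g i = f i := by
  classical
  induction T using Finset.induction_on with
  | empty => exact ⟨1, one_mem G, by simp⟩
  | @insert i T hiT ih =>
    obtain ⟨g₀, hg₀, hg₀T⟩ := ih (fun a ha b hb hab =>
      hT a (Finset.mem_insert_of_mem ha) b (Finset.mem_insert_of_mem hb) hab)
    have hfulls : ∀ j ∈ T, myIsFull G i j := fun j hj =>
      hT i (Finset.mem_insert_self i T) j (Finset.mem_insert_of_mem hj)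
        (fun hh => hiT (hh ▸ hj))
    obtain ⟨g₁, hg₁, hg₁i, hg₁T⟩ := my_vanish hna surj T i hiT hfulls (f i * (g₀ i)⁻¹)
    refine ⟨g₁ * g₀, mul_mem hg₁ hg₀, ?_⟩
    intro k hk
    rcases Finset.mem_insert.mp hk with hki | hkT
    · subst hki
      show g₁ k * g₀ k = f k
      rw [hg₁i]; group
    · show g₁ k * g₀ k = f k
      rw [hg₁T k hkT, hg₀T k hkT, one_mul]


end StmtOneHelpers


/-- Let `S` be a finite simple non-abelian group, `n ≥ 1`, and `G ≤ Sⁿ`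
with `proj_i(G) = S` for all `i`. Then `G` is a product of subdiagonals of `Sⁿ`:
there are an equivalence relation `∼` on `{1,…,n}` and automorphisms `α₁,…,αₙ` of `S`
such that `G = {g | (α i)⁻¹ (g i) = (α j)⁻¹ (g j) whenever i ∼ j}`. -/

theorem stmt_1 {S : Type*} [Group S] [Finite S] [IsSimpleGroup S]
    (hna : ∃ a b : S, a * b ≠ b * a) {n : ℕ} (hn : 1 ≤ n)
    (G : Subgroup (Fin n → S))
    (h : ∀ i : Fin n, Subgroup.map (Pi.evalMonoidHom (fun _ => S) i) G = ⊤) :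
    ∃ (r : Setoid (Fin n)) (α : Fin n → MulAut S),
      (G : Set (Fin n → S)) =
        {g | ∀ i j : Fin n, r.r i j → (α i).symm (g i) = (α j).symm (g j)} := by
  classical
  have surj : ∀ (i : Fin n) (s : S), ∃ g ∈ G, g i = s := by
    intro i s
    have hs : s ∈ Subgroup.map (Pi.evalMonoidHom (fun _ => S) i) G := by
      rw [h i]; trivial
    obtain ⟨g, hg, hgi⟩ := hs
    exact ⟨g, hg, hgi⟩
  set rel : Fin n → Fin n → Prop := fun i j => ¬ myIsFull G i j with hrel
  have hrefl : ∀ i, rel i i := by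
    intro i hf
    obtain ⟨a, ha⟩ := exists_ne (1 : S)
    obtain ⟨g, hg, h1, h2⟩ := hf 1 a
    exact ha (h2.symm.trans h1)
  have hsymm : ∀ {i j}, rel i j → rel j i := by
    intro i j hij hf
    exact hij (myIsFull_symm hf)
  have htrans : ∀ {i j k}, rel i j → rel j k → rel i k := by
    intro i j k hij hjk hf
    obtain ⟨a, ha⟩ := exists_ne (1 : S)
    obtain ⟨g, hg, h1, h2⟩ := hf 1 a
    have hj : g j = 1 := my_claim1 surj hij g hg h1
    have hk : g k = 1 := my_claim1 surj hjk g hg hj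
    exact ha (h2.symm.trans hk)
  let r : Setoid (Fin n) := ⟨rel, ⟨hrefl, hsymm, htrans⟩⟩
  letI := r
  let c : Fin n → Fin n := fun i => (⟦i⟧ : Quotient r).out
  have hc_rel : ∀ i, rel (c i) i := fun i => Quotient.exact (Quotient.out_eq (⟦i⟧ : Quotient r))
  have hc_eq : ∀ i j, rel i j → c i = c j := by
    intro i j hij
    show (⟦i⟧ : Quotient r).out = (⟦j⟧ : Quotient r).out
    rw [Quotient.sound hij]
  have hcc : ∀ i, c (c i) = c i := by
    intro i
    show ((⟦(⟦i⟧ : Quotient r).out⟧ : Quotient r)).out = (⟦i⟧ : Quotient r).out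
    rw [Quotient.out_eq]
  have hαex : ∀ i, ∃ β : MulAut S, ∀ g ∈ G, β (g (c i)) = g i :=
    fun i => my_beta surj (hc_rel i)
  choose α hα using hαex
  refine ⟨r, α, ?_⟩
  ext g
  simp only [Set.mem_setOf_eq, SetLike.mem_coe]
  constructor
  · intro hg i j hij
    have e1 : (α i).symm (g i) = g (c i) := by
      rw [← hα i g hg]; exact (α i).symm_apply_apply _
    have e2 : (α j).symm (g j) = g (c j) := by
      rw [← hα j g hg]; exact (α j).symm_apply_apply _
    rw [e1, e2, hc_eq i j hij]
  · intro hg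
    set T : Finset (Fin n) := Finset.image c Finset.univ with hTdef
    have hT : ∀ a ∈ T, ∀ b ∈ T, a ≠ b → myIsFull G a b := by
      intro a ha b hb hab
      by_contra hcon
      obtain ⟨x, -, hx⟩ := Finset.mem_image.mp ha
      obtain ⟨y, -, hy⟩ := Finset.mem_image.mp hb
      have hca : c a = a := by rw [← hx, hcc]
      have hcb : c b = b := by rw [← hy, hcc]
      exact hab (by rw [← hca, ← hcb, hc_eq a b hcon])
    obtain ⟨h₀, hh₀, hmatch⟩ := my_match hna surj T hT g
    have hgh : g = h₀ := by
      funext i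
      have hci : c i ∈ T := Finset.mem_image_of_mem c (Finset.mem_univ i)
      have h1 : h₀ (c i) = g (c i) := hmatch _ hci
      have h2 : α i (h₀ (c i)) = h₀ i := hα i h₀ hh₀
      -- α (c i) is the identity
      have hid : ∀ s : S, α (c i) s = s := by
        intro s
        obtain ⟨g', hg', hg'c⟩ := surj (c i) s
        have := hα (c i) g' hg'
        rw [hcc i] at this
        rw [← hg'c]; exact this
      have hids : ∀ s : S, (α (c i)).symm s = s := by
        intro s
        conv_lhs => rw [← hid s]
        exact (α (c i)).symm_apply_apply s
      have hcond := hg i (c i) (hsymm (hc_rel i))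
      rw [hids] at hcond
      -- hcond : (α i).symm (g i) = g (c i)
      have : g i = α i (g (c i)) := by
        rw [← hcond]; exact ((α i).apply_symm_apply _).symm
      rw [this, ← h1, h2]
    rw [hgh]; exact hh₀
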